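/- For every d ≥ 2, the automorphism group of the infinite complete rooted d-ary tree admits a surjective group homomorphism onto ∏_{n=1}^∞ ℤ/2ℤ, given by the collection of sign homomorphisms of the actions on the levels of the tree. -/

import Mathlib

/-- Adjacency in the complete rooted `d`-ary tree with vertex set the words over `Fin d`:
a word of positive length is adjacent to its truncation (dropping the last letter). -/
def TreeAdj {d : ℕ} (v w : List (Fin d)) : Prop :=
  (v = w.dropLast ∧ w ≠ []) ∨ (w = v.dropLast ∧ v ≠ [])

/-- The automorphism group of the infinite complete rooted `d`-ary tree `T_∞(d)`:
permutations of the vertex set `List (Fin d)` fixing the root `[]` and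
preserving adjacency. -/
def treeAutInf (d : ℕ) : Subgroup (Equiv.Perm (List (Fin d))) where
  carrier := {π | π [] = [] ∧ ∀ v w, TreeAdj v w ↔ TreeAdj (π v) (π w)}
  one_mem' := ⟨rfl, fun _ _ => Iff.rfl⟩
  mul_mem' := by
    rintro a b ⟨ha1, ha2⟩ ⟨hb1, hb2⟩
    exact ⟨by simp [Equiv.Perm.mul_apply, hb1, ha1],
      fun v w => (hb2 v w).trans (ha2 _ _)⟩
  inv_mem' := by
    rintro a ⟨h1, h2⟩
    refine ⟨?_, fun v w => ?_⟩
    · conv_lhs => rw [← h1]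
      exact a.symm_apply_apply []
    · simpa using (h2 (a⁻¹ v) (a⁻¹ w)).symm

/-- The vertex set of the complete rooted `d`-ary tree of depth `k`:
words over `Fin d` of length at most `k`. -/
def TreeVtx (d k : ℕ) : Type := {l : List (Fin d) // l.length ≤ k}

/-- The automorphism group of the complete rooted `d`-ary tree `T_k(d)` of depth `k`:
permutations of the vertex set fixing the root `[]` and preserving adjacency. -/
def treeAutFin (d k : ℕ) : Subgroup (Equiv.Perm (TreeVtx d k)) where
  carrier := {π | π ⟨[], Nat.zero_le k⟩ = ⟨[], Nat.zero_le k⟩ ∧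
    ∀ v w, TreeAdj v.1 w.1 ↔ TreeAdj (π v).1 (π w).1}
  one_mem' := ⟨rfl, fun v w => by rw [Equiv.Perm.one_apply, Equiv.Perm.one_apply]⟩
  mul_mem' := by
    rintro a b ⟨ha1, ha2⟩ ⟨hb1, hb2⟩
    exact ⟨by show a (b _) = _; rw [hb1, ha1],
      fun v w => (hb2 v w).trans (ha2 _ _)⟩
  inv_mem' := by
    rintro a ⟨h1, h2⟩
    refine ⟨?_, fun v w => ?_⟩
    · conv_lhs => rw [← h1]
      exact a.symm_apply_apply _
    · simpa using (h2 (a⁻¹ v) (a⁻¹ w)).symm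

instance levelFintype (d n : ℕ) : Fintype {l : List (Fin d) // l.length = n} :=
  Fintype.ofEquiv (List.Vector (Fin d) n) (Equiv.refl _)

namespace TreeAux


variable {d : ℕ}

def z0 (hd : 2 ≤ d) : Fin d := ⟨0, by omega⟩
def z1 (hd : 2 ≤ d) : Fin d := ⟨1, by omega⟩

lemma z0_ne_z1 (hd : 2 ≤ d) : z0 hd ≠ z1 hd := by
  simp [z0, z1, Fin.ext_iff]

def sw (hd : 2 ≤ d) : Equiv.Perm (Fin d) := Equiv.swap (z0 hd) (z1 hd)

lemma sw_sw (hd : 2 ≤ d) (x : Fin d) : sw hd (sw hd x) = x := Equiv.swap_apply_self _ _ _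

lemma sw_z0 (hd : 2 ≤ d) : sw hd (z0 hd) = z1 hd := Equiv.swap_apply_left _ _

lemma sw_z1 (hd : 2 ≤ d) : sw hd (z1 hd) = z0 hd := Equiv.swap_apply_right _ _

lemma sw_ne (hd : 2 ≤ d) {a : Fin d} (h0 : a ≠ z0 hd) (h1 : a ≠ z1 hd) : sw hd a = a :=
  Equiv.swap_apply_of_ne_of_ne h0 h1

def fA (hd : 2 ≤ d) (s : ℕ → Bool) : ℕ → List (Fin d) → List (Fin d)
  | _, [] => []
  | k, x :: xs => (if s k then sw hd x else x) :: (if x = z0 hd then fA hd s (k+1) xs else xs)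

def fB (hd : 2 ≤ d) (s : ℕ → Bool) : ℕ → List (Fin d) → List (Fin d)
  | _, [] => []
  | k, y :: ys =>
      (if s k then sw hd y else y) ::
        (if (if s k then sw hd y else y) = z0 hd then fB hd s (k+1) ys else ys)

lemma fB_fA (hd : 2 ≤ d) (s : ℕ → Bool) :
    ∀ (l : List (Fin d)) (k : ℕ), fB hd s k (fA hd s k l) = l := by
  intro l
  induction l with
  | nil => intro k; simp [fA, fB]
  | cons x xs ih =>
    intro k
    simp only [fA, fB]
    have hsw : (if s k then sw hd (if s k then sw hd x else x) else (if s k then sw hd x else x)) = x := by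
      cases hs : s k <;> simp [sw_sw]
    rw [hsw]
    by_cases hx : x = z0 hd <;> simp [hx, ih]

lemma fA_fB (hd : 2 ≤ d) (s : ℕ → Bool) :
    ∀ (l : List (Fin d)) (k : ℕ), fA hd s k (fB hd s k l) = l := by
  intro l
  induction l with
  | nil => intro k; simp [fA, fB]
  | cons y ys ih =>
    intro k
    simp only [fA, fB]
    have hsw : (if s k then sw hd (if s k then sw hd y else y) else (if s k then sw hd y else y)) = y := by
      cases hs : s k <;> simp [sw_sw]
    rw [hsw]
    by_cases hx : (if s k then sw hd y else y) = z0 hd <;> simp [hx, ih]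

lemma fA_length (hd : 2 ≤ d) (s : ℕ → Bool) :
    ∀ (l : List (Fin d)) (k : ℕ), (fA hd s k l).length = l.length := by
  intro l
  induction l with
  | nil => intro k; simp [fA]
  | cons x xs ih =>
    intro k
    simp only [fA, List.length_cons]
    by_cases hx : x = z0 hd <;> simp [hx, ih]

lemma fA_nil (hd : 2 ≤ d) (s : ℕ → Bool) (l : List (Fin d)) (k : ℕ) :
    fA hd s k l = [] ↔ l = [] := by
  cases l <;> simp [fA]

lemma fB_nil (hd : 2 ≤ d) (s : ℕ → Bool) (l : List (Fin d)) (k : ℕ) :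
    fB hd s k l = [] ↔ l = [] := by
  cases l <;> simp [fB]

lemma fA_dropLast (hd : 2 ≤ d) (s : ℕ → Bool) :
    ∀ (l : List (Fin d)) (k : ℕ), fA hd s k l.dropLast = (fA hd s k l).dropLast := by
  intro l
  induction l with
  | nil => intro k; simp [fA]
  | cons x xs ih =>
    intro k
    cases xs with
    | nil => simp [fA]
    | cons a as =>
      have h1 : (x :: a :: as).dropLast = x :: (a :: as).dropLast := rfl
      rw [h1]
      simp only [fA]
      by_cases hx : x = z0 hd
      · simp only [if_pos hx, ih]
        have h2 : fA hd s (k+1) (a :: as) =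
            (if s (k+1) then sw hd a else a) :: (if a = z0 hd then fA hd s (k+2) as else as) := rfl
        rw [h2]
        rfl
      · simp only [if_neg hx]
        rfl

lemma fB_dropLast (hd : 2 ≤ d) (s : ℕ → Bool) :
    ∀ (l : List (Fin d)) (k : ℕ), fB hd s k l.dropLast = (fB hd s k l).dropLast := by
  intro l
  induction l with
  | nil => intro k; simp [fB]
  | cons x xs ih =>
    intro k
    cases xs with
    | nil => simp [fB]
    | cons a as =>
      have h1 : (x :: a :: as).dropLast = x :: (a :: as).dropLast := rfl
      rw [h1]
      simp only [fB]
      by_cases hx : (if s k then sw hd x else x) = z0 hd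
      · simp only [if_pos hx, ih]
        have h2 : fB hd s (k+1) (a :: as) =
            (if s (k+1) then sw hd a else a) ::
              (if (if s (k+1) then sw hd a else a) = z0 hd then fB hd s (k+2) as else as) := rfl
        rw [h2]
        rfl
      · simp only [if_neg hx]
        rfl

lemma adj_map (F : List (Fin d) → List (Fin d))
    (hdrop : ∀ l, F l.dropLast = (F l).dropLast)
    (hnil : ∀ l, F l = [] ↔ l = []) {v w : List (Fin d)} (h : TreeAdj v w) :
    TreeAdj (F v) (F w) := by
  rcases h with ⟨h1, h2⟩ | ⟨h1, h2⟩
  · exact Or.inl ⟨by rw [h1, hdrop], fun hh => h2 ((hnil w).1 hh)⟩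
  · exact Or.inr ⟨by rw [h1, hdrop], fun hh => h2 ((hnil v).1 hh)⟩

def fEquiv (hd : 2 ≤ d) (s : ℕ → Bool) : Equiv.Perm (List (Fin d)) where
  toFun := fA hd s 0
  invFun := fB hd s 0
  left_inv l := fB_fA hd s l 0
  right_inv l := fA_fB hd s l 0

lemma fEquiv_mem (hd : 2 ≤ d) (s : ℕ → Bool) : fEquiv hd s ∈ treeAutInf d := by
  constructor
  · show fA hd s 0 [] = []
    rw [fA_nil]
  · intro v w
    constructor
    · exact adj_map _ (fun l => fA_dropLast hd s l 0) (fun l => fA_nil hd s l 0)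
    · intro h
      have h2 := adj_map (fB hd s 0) (fun l => fB_dropLast hd s l 0)
        (fun l => fB_nil hd s l 0) h
      have e1 : fB hd s 0 ((fEquiv hd s) v) = v := fB_fA hd s v 0
      have e2 : fB hd s 0 ((fEquiv hd s) w) = w := fB_fA hd s w 0
      rwa [e1, e2] at h2

lemma len_le {g : Equiv.Perm (List (Fin d))} (hg : g ∈ treeAutInf d) :
    ∀ (n : ℕ) (l : List (Fin d)), l.length = n → (g l).length ≤ n := by
  intro n
  induction n with
  | zero =>
    intro l hl
    rw [List.length_eq_zero_iff.mp hl, hg.1]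
    simp
  | succ n ih =>
    intro l hl
    have hln : l ≠ [] := by intro h; subst h; simp at hl
    have hadj : TreeAdj l.dropLast l := Or.inl ⟨rfl, hln⟩
    have h2 := (hg.2 _ _).mp hadj
    have hdl : l.dropLast.length = n := by rw [List.length_dropLast, hl]; omega
    have hih := ih l.dropLast hdl
    rcases h2 with ⟨h1, hne⟩ | ⟨h1, _⟩
    · have hpos : 0 < (g l).length := List.length_pos_iff.mpr hne
      have : (g l).dropLast.length = (g l).length - 1 := List.length_dropLast
      rw [← h1] at this
      omega
    · rw [h1]
      have : (g l.dropLast).dropLast.length = (g l.dropLast).length - 1 := List.length_dropLast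
      omega

lemma mem_len {g : Equiv.Perm (List (Fin d))} (hg : g ∈ treeAutInf d) (l : List (Fin d)) :
    (g l).length = l.length := by
  have h1 := len_le hg l.length l rfl
  have hg' : g⁻¹ ∈ treeAutInf d := (treeAutInf d).inv_mem hg
  have h2 := len_le hg' (g l).length (g l) rfl
  rw [← Equiv.Perm.mul_apply, inv_mul_cancel, Equiv.Perm.one_apply] at h2
  omega

def levelHom (d n : ℕ) : ↥(treeAutInf d) →* Equiv.Perm {l : List (Fin d) // l.length = n + 1} where
  toFun g := (g : Equiv.Perm (List (Fin d))).subtypePerm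
    (fun l => by simp [mem_len g.2])
  map_one' := by
    ext ⟨l, hl⟩
    simp [Equiv.Perm.subtypePerm_apply]
  map_mul' := by
    intro a b
    ext ⟨l, hl⟩
    rfl

def bitHom : ℤˣ →* Multiplicative (ZMod 2) where
  toFun u := Multiplicative.ofAdd (if u = 1 then 0 else 1)
  map_one' := by simp
  map_mul' := by
    intro a b
    rcases Int.units_eq_one_or a with rfl | rfl <;>
      rcases Int.units_eq_one_or b with rfl | rfl <;> decide

lemma bitHom_neg_one : bitHom (-1) = Multiplicative.ofAdd (1 : ZMod 2) := by decide

def sigmaHom (d : ℕ) : ↥(treeAutInf d) →* (ℕ → Multiplicative (ZMod 2)) :=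
  Pi.monoidHom fun n => bitHom.comp (Equiv.Perm.sign.comp (levelHom d n))


def E (hd : 2 ≤ d) (s : ℕ → Bool) : ↥(treeAutInf d) :=
  ⟨fEquiv hd s, fEquiv_mem hd s⟩
-- ==================== NEW MATERIAL ====================

lemma fA_congr (hd : 2 ≤ d) {s s' : ℕ → Bool} :
    ∀ (l : List (Fin d)) (k : ℕ),
      (∀ j, k ≤ j → j < k + l.length → s j = s' j) → fA hd s k l = fA hd s' k l := by
  intro l
  induction l with
  | nil => intro k _; simp [fA]
  | cons x xs ih =>
    intro k h
    simp only [fA]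
    have hk : s k = s' k := h k le_rfl (by simp)
    rw [hk]
    by_cases hx : x = z0 hd
    · simp only [if_pos hx]
      rw [ih (k+1) (fun j hj1 hj2 => h j (by omega) (by simp at hj2 ⊢; omega))]
    · simp [hx]

lemma sigma_congr (hd : 2 ≤ d) {s s' : ℕ → Bool} (n : ℕ) (h : ∀ k ≤ n, s k = s' k) :
    sigmaHom d (E hd s) n = sigmaHom d (E hd s') n := by
  have hlev : levelHom d n (E hd s) = levelHom d n (E hd s') := by
    apply Equiv.ext
    rintro ⟨l, hl⟩
    apply Subtype.ext
    show fA hd s 0 l = fA hd s' 0 l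
    exact fA_congr hd l 0 (fun j _ hj2 => h j (by omega))
  show bitHom (Equiv.Perm.sign (levelHom d n (E hd s))) = _
  rw [hlev]
  rfl

lemma fA_update (hd : 2 ≤ d) (s : ℕ → Bool) (b : Bool) :
    ∀ (m k : ℕ) (l : List (Fin d)),
      l.take m ≠ List.replicate m (z0 hd) →
      fA hd (Function.update s (k+m) b) k l = fA hd s k l := by
  intro m
  induction m with
  | zero => intro k l h; simp at h
  | succ m ih =>
    intro k l h
    cases l with
    | nil => simp [fA]
    | cons x xs =>
      simp only [fA]
      have hk : Function.update s (k + (m+1)) b k = s k := Function.update_of_ne (by omega) _ _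
      rw [hk]
      by_cases hx : x = z0 hd
      · simp only [if_pos hx]
        have h' : xs.take m ≠ List.replicate m (z0 hd) := by
          intro hc
          apply h
          rw [List.take_succ_cons, List.replicate_succ, hc, hx]
        rw [show k + (m+1) = (k+1) + m by omega, ih (k+1) xs h']
      · simp [hx]

lemma fA_replicate_append (hd : 2 ≤ d) (s : ℕ → Bool) :
    ∀ (m k : ℕ) (a : Fin d),
      fA hd s k (List.replicate m (z0 hd) ++ [a]) =
        fA hd s k (List.replicate m (z0 hd)) ++ [if s (k+m) then sw hd a else a] := by
  intro m
  induction m with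
  | zero => intro k a; simp [fA]
  | succ m ih =>
    intro k a
    rw [List.replicate_succ, List.cons_append]
    simp only [fA, if_pos rfl]
    rw [ih (k+1) a]
    have : k + 1 + m = k + (m+1) := by omega
    rw [this]
    rfl

lemma fA_inj (hd : 2 ≤ d) (s : ℕ → Bool) {l1 l2 : List (Fin d)}
    (h : fA hd s 0 l1 = fA hd s 0 l2) : l1 = l2 := by
  have := congrArg (fB hd s 0) h
  rwa [fB_fA, fB_fA] at this

lemma fA_update_val (hd : 2 ≤ d) (s : ℕ → Bool) (n : ℕ) (l : List (Fin d))
    (hl : l.length = n + 1) :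
    fA hd (Function.update s n (!s n)) 0 l =
      if fA hd s 0 l = fA hd s 0 (List.replicate n (z0 hd) ++ [z0 hd]) then
        fA hd s 0 (List.replicate n (z0 hd) ++ [z1 hd])
      else if fA hd s 0 l = fA hd s 0 (List.replicate n (z0 hd) ++ [z1 hd]) then
        fA hd s 0 (List.replicate n (z0 hd) ++ [z0 hd])
      else fA hd s 0 l := by
  by_cases hpre : l.take n = List.replicate n (z0 hd)
  · obtain ⟨a, ha⟩ : ∃ a, l = List.replicate n (z0 hd) ++ [a] := by
      have hdlen : (l.drop n).length = 1 := by rw [List.length_drop, hl]; omega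
      obtain ⟨c, hc⟩ := List.length_eq_one_iff.mp hdlen
      exact ⟨c, by conv_lhs => rw [← List.take_append_drop n l, hpre, hc]⟩
    subst ha
    rw [fA_replicate_append, fA_replicate_append, fA_replicate_append, fA_replicate_append]
    have hrep : fA hd (Function.update s n (!s n)) 0 (List.replicate n (z0 hd)) =
        fA hd s 0 (List.replicate n (z0 hd)) := by
      apply fA_congr
      intro j _ hj
      rw [List.length_replicate] at hj
      exact Function.update_of_ne (by omega) _ _
    rw [hrep]
    rw [show (0:ℕ) + n = n from Nat.zero_add n]
    rw [Function.update_self]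
    simp only [Nat.zero_add, List.append_cancel_left_eq, List.cons.injEq, and_true]
    by_cases ha0 : a = z0 hd
    · subst ha0
      cases hs : s n <;> simp [Nat.zero_add, Function.update_self, sw_z0, sw_z1, z0_ne_z1 hd]
    · by_cases ha1 : a = z1 hd
      · subst ha1
        cases hs : s n <;>
          simp [Nat.zero_add, Function.update_self, sw_z0, sw_z1, z0_ne_z1 hd, (z0_ne_z1 hd).symm]
      · have hswa : sw hd a = a := sw_ne hd ha0 ha1
        cases hs : s n <;>
          simp [Nat.zero_add, Function.update_self, hswa, sw_z0, sw_z1, ha0, ha1, z0_ne_z1 hd, (z0_ne_z1 hd).symm]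
  · have h0 : Function.update s n (!s n) = Function.update s (0 + n) (!s n) := by
      rw [Nat.zero_add]
    rw [h0, fA_update hd s _ n 0 l hpre]
    have htake : ∀ x : Fin d, (List.replicate n (z0 hd) ++ [x]).take n = List.replicate n (z0 hd) := by
      intro x
      rw [List.take_append_of_le_length (by simp)]
      simp
    rw [if_neg, if_neg]
    · intro hc
      apply hpre
      rw [fA_inj hd s hc, htake]
    · intro hc
      apply hpre
      rw [fA_inj hd s hc, htake]

lemma sigma_flip (hd : 2 ≤ d) (s : ℕ → Bool) (n : ℕ) :
    sigmaHom d (E hd (Function.update s n (!s n))) n =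
      Multiplicative.ofAdd (1 : ZMod 2) * sigmaHom d (E hd s) n := by
  set u0 : List (Fin d) := fA hd s 0 (List.replicate n (z0 hd) ++ [z0 hd]) with hu0
  set u1 : List (Fin d) := fA hd s 0 (List.replicate n (z0 hd) ++ [z1 hd]) with hu1
  have hu0len : u0.length = n + 1 := by rw [hu0, fA_length]; simp
  have hu1len : u1.length = n + 1 := by rw [hu1, fA_length]; simp
  set U0 : {l : List (Fin d) // l.length = n + 1} := ⟨u0, hu0len⟩ with hU0
  set U1 : {l : List (Fin d) // l.length = n + 1} := ⟨u1, hu1len⟩ with hU1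
  have hne : U0 ≠ U1 := by
    rw [hU0, hU1]
    intro hc
    have : u0 = u1 := congrArg Subtype.val hc
    have := fA_inj hd s this
    exact z0_ne_z1 hd (by simpa using this)
  have swap_val : ∀ (X : {l : List (Fin d) // l.length = n + 1}),
      ((Equiv.swap U0 U1 X : {l : List (Fin d) // l.length = n + 1}) : List (Fin d)) =
        if (X : List (Fin d)) = u0 then u1 else if (X : List (Fin d)) = u1 then u0
        else (X : List (Fin d)) := by
    intro X
    rw [Equiv.swap_apply_def, apply_ite (Subtype.val), apply_ite (Subtype.val)]
    simp only [hU0, hU1, Subtype.ext_iff]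
  have hlev : levelHom d n (E hd (Function.update s n (!s n))) =
      Equiv.swap U0 U1 * levelHom d n (E hd s) := by
    apply Equiv.ext
    rintro ⟨l, hl⟩
    rw [Equiv.Perm.mul_apply]
    apply Subtype.ext
    rw [swap_val]
    have hXval : (((levelHom d n (E hd s)) ⟨l, hl⟩ : {l : List (Fin d) // l.length = n + 1}) : List (Fin d)) = fA hd s 0 l := rfl
    rw [hXval]
    show fA hd (Function.update s n (!s n)) 0 l = _
    rw [fA_update_val hd s n l hl, ← hu0, ← hu1]
  show bitHom (Equiv.Perm.sign (levelHom d n (E hd (Function.update s n (!s n))))) = _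
  rw [hlev, map_mul, Equiv.Perm.sign_swap hne, map_mul, bitHom_neg_one]
  rfl

def Tseq (hd : 2 ≤ d) (ε : ℕ → Multiplicative (ZMod 2)) : ℕ → (ℕ → Bool)
  | 0 => fun _ => false
  | n+1 =>
    if sigmaHom d (E hd (Tseq hd ε n)) n = ε n then Tseq hd ε n
    else Function.update (Tseq hd ε n) n (!(Tseq hd ε n n))

def tlim (hd : 2 ≤ d) (ε : ℕ → Multiplicative (ZMod 2)) : ℕ → Bool :=
  fun k => Tseq hd ε (k+1) k

lemma Tseq_stable (hd : 2 ≤ d) (ε : ℕ → Multiplicative (ZMod 2)) :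
    ∀ n k, k < n → Tseq hd ε n k = tlim hd ε k := by
  intro n
  induction n with
  | zero => intro k hk; omega
  | succ n ih =>
    intro k hk
    rcases Nat.lt_succ_iff_lt_or_eq.mp hk with h | rfl
    · have hstep : Tseq hd ε (n+1) k = Tseq hd ε n k := by
        simp only [Tseq]
        split_ifs with h'
        · rfl
        · exact Function.update_of_ne (by omega) _ _
      rw [hstep, ih k h]
    · rfl

lemma Tseq_spec (hd : 2 ≤ d) (ε : ℕ → Multiplicative (ZMod 2)) (n : ℕ) :
    sigmaHom d (E hd (Tseq hd ε (n+1))) n = ε n := by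
  by_cases h : sigmaHom d (E hd (Tseq hd ε n)) n = ε n
  · have : Tseq hd ε (n+1) = Tseq hd ε n := by simp only [Tseq]; rw [if_pos h]
    rw [this, h]
  · have : Tseq hd ε (n+1) = Function.update (Tseq hd ε n) n (!(Tseq hd ε n n)) := by
      simp only [Tseq]; rw [if_neg h]
    rw [this, sigma_flip hd (Tseq hd ε n) n]
    have key : ∀ x y : Multiplicative (ZMod 2), x ≠ y →
        Multiplicative.ofAdd (1 : ZMod 2) * x = y := by decide
    exact key _ _ h

lemma sigma_surj (hd : 2 ≤ d) : Function.Surjective (sigmaHom d) := by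
  intro ε
  refine ⟨E hd (tlim hd ε), funext fun n => ?_⟩
  have h1 : sigmaHom d (E hd (tlim hd ε)) n = sigmaHom d (E hd (Tseq hd ε (n+1))) n :=
    sigma_congr hd n (fun k hk => (Tseq_stable hd ε (n+1) k (by omega)).symm)
  rw [h1, Tseq_spec]


end TreeAux

/-- For every `d ≥ 2`, the automorphism group of the infinite complete rooted `d`-ary tree
admits a surjective group homomorphism onto `∏_{n=1}^∞ ℤ/2ℤ`, given by the collection of
sign homomorphisms of the actions on the levels of the tree.  (Automorphisms preserve the
levels; the `n`-th coordinate, for `n ≥ 1`, is the sign of the induced permutation of the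
words of length `n`, written additively in `ℤ/2ℤ`.) -/
theorem treeAutInf_surjects_onto_prod_zmod_two (d : ℕ) (hd : 2 ≤ d) :
    ∃ hlen : ∀ (g : treeAutInf d) (l : List (Fin d)),
        ((g : Equiv.Perm (List (Fin d))) l).length = l.length,
      ∃ σ : ↥(treeAutInf d) →* (ℕ → Multiplicative (ZMod 2)),
        Function.Surjective σ ∧
        ∀ (g : treeAutInf d) (n : ℕ),
          σ g n = Multiplicative.ofAdd
            (if Equiv.Perm.sign
                ((g : Equiv.Perm (List (Fin d))).subtypePerm
                  (p := fun l => l.length = n + 1) (fun l => by simp only [hlen g l])) = 1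
             then (0 : ZMod 2) else 1) := by
  exact ⟨fun g l => TreeAux.mem_len g.2 l, TreeAux.sigmaHom d, TreeAux.sigma_surj hd,
    fun g n => rfl⟩
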